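/- arXiv:1910.02871 — 2 statements merged into one kernel-verified Lean document; each statement's English description precedes it below -/
import Mathlib

section
/- Let Γ be an irreducible component of G = G₁ ∪ G₂. If G₁ is essential, then p₁(Γ) is a union of irreducible components of the stochastic dynamics of G₁. -/
/-- A reaction `ν → ν'` is active on `x` iff `ν ≤ x` componentwise. -/
def Active {σ : Type*} (ν x : σ → ℕ) : Prop := ∀ i, ν i ≤ x i

/-- One jump of the CTMC: firing an active reaction `ν → ν'` moves `x` to `x + ν' - ν`. -/
def Step {σ : Type*} (R : Set ((σ → ℕ) × (σ → ℕ))) (x y : σ → ℕ) : Prop :=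
  ∃ r ∈ R, Active r.1 x ∧ ∀ i, y i + r.1 i = x i + r.2 i

/-- `u` is accessible from `x` via a finite sequence of active reactions. -/
def Accessible {σ : Type*} (R : Set ((σ → ℕ) × (σ → ℕ))) : (σ → ℕ) → (σ → ℕ) → Prop :=
  Relation.ReflTransGen (Step R)

/-- An irreducible component (closed communicating class): a nonempty `Γ` such that for
`x ∈ Γ`, `u` is accessible from `x` iff `u ∈ Γ`. -/
def IsIrreducibleComponent {σ : Type*} (R : Set ((σ → ℕ) × (σ → ℕ)))
    (Γ : Set (σ → ℕ)) : Prop :=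
  Γ.Nonempty ∧ ∀ x ∈ Γ, ∀ u, Accessible R x u ↔ u ∈ Γ

/-- A network is essential if the whole state space is a union of closed communicating
classes. -/
def Essential {σ : Type*} (R : Set ((σ → ℕ) × (σ → ℕ))) : Prop :=
  ∀ x : σ → ℕ, ∃ Γ, IsIrreducibleComponent R Γ ∧ x ∈ Γ

/-- Zero-padding embedding of a state on species `S` into the full species set. -/
def pad {ι : Type*} [DecidableEq ι] (S : Finset ι) (v : ↥S → ℕ) : ι → ℕ :=
  fun i => if h : i ∈ S then v ⟨i, h⟩ else 0

/-- Coordinate projection onto the species of `S`. -/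
def proj {ι : Type*} (S : Finset ι) (x : ι → ℕ) : ↥S → ℕ := fun i => x ↑i

/-- The reactions of a subnetwork on species `S`, embedded (by zero-padding) as reactions
on the full species set. -/
def padR {ι : Type*} [DecidableEq ι] (S : Finset ι) (R : Set ((↥S → ℕ) × (↥S → ℕ))) :
    Set ((ι → ℕ) × (ι → ℕ)) := (fun r => (pad S r.1, pad S r.2)) '' R


lemma step_lift {ι : Type*} [DecidableEq ι] (S₁ : Finset ι)
    (R₁ : Set ((↥S₁ → ℕ) × (↥S₁ → ℕ))) (x : ι → ℕ) (w : ↥S₁ → ℕ)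
    (h : Step R₁ (proj S₁ x) w) :
    ∃ x', Step (padR S₁ R₁) x x' ∧ proj S₁ x' = w := by
  obtain ⟨r, hr, hact, heq⟩ := h
  refine ⟨fun i => if h : i ∈ S₁ then w ⟨i, h⟩ else x i,
    ⟨(pad S₁ r.1, pad S₁ r.2), ⟨r, hr, rfl⟩, ?_, ?_⟩, ?_⟩
  · intro i
    simp only [pad]
    split
    · exact hact _
    · exact Nat.zero_le _
  · intro i
    simp only [pad]
    split
    · exact heq _
    · simp
  · funext i
    simp [proj]

lemma accessible_lift {ι : Type*} [DecidableEq ι] (S₁ : Finset ι)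
    (R₁ : Set ((↥S₁ → ℕ) × (↥S₁ → ℕ))) (x : ι → ℕ) (w : ↥S₁ → ℕ)
    (h : Accessible R₁ (proj S₁ x) w) :
    ∃ x', Accessible (padR S₁ R₁) x x' ∧ proj S₁ x' = w := by
  induction h with
  | refl => exact ⟨x, Relation.ReflTransGen.refl, rfl⟩
  | tail _ hstep ih =>
    obtain ⟨x', hacc, rfl⟩ := ih
    obtain ⟨x'', hstep', hproj⟩ := step_lift S₁ R₁ x' _ hstep
    exact ⟨x'', hacc.tail hstep', hproj⟩

lemma accessible_mono {σ : Type*} {R R' : Set ((σ → ℕ) × (σ → ℕ))} (hR : R ⊆ R')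
    {x y : σ → ℕ} (h : Accessible R x y) : Accessible R' x y := by
  induction h with
  | refl => exact Relation.ReflTransGen.refl
  | tail _ hstep ih =>
    obtain ⟨r, hr, ha, he⟩ := hstep
    exact ih.tail ⟨r, hR hr, ha, he⟩

/-- if `G₁` is essential and `Γ` is an irreducible component of the union,
then `p₁(Γ)` is a union of irreducible components of `G₁`. -/
theorem stmt6 {ι : Type*} [Fintype ι] [DecidableEq ι] (S₁ S₂ : Finset ι)
    (hcov : S₁ ∪ S₂ = Finset.univ)
    (R₁ : Set ((↥S₁ → ℕ) × (↥S₁ → ℕ))) (R₂ : Set ((↥S₂ → ℕ) × (↥S₂ → ℕ)))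
    (h₁ : Essential R₁)
    (Γ : Set (ι → ℕ)) (hΓ : IsIrreducibleComponent (padR S₁ R₁ ∪ padR S₂ R₂) Γ) :
    ∃ 𝒞 : Set (Set (↥S₁ → ℕ)),
      (∀ C ∈ 𝒞, IsIrreducibleComponent R₁ C) ∧ ⋃₀ 𝒞 = proj S₁ '' Γ := by
  refine ⟨{C | IsIrreducibleComponent R₁ C ∧ C ⊆ proj S₁ '' Γ}, fun C hC => hC.1, ?_⟩
  apply Set.Subset.antisymm
  · intro w hw
    obtain ⟨C, hC, hCw⟩ := hw
    exact hC.2 hCw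
  · rintro w ⟨x, hx, rfl⟩
    obtain ⟨C, hC, hmem⟩ := h₁ (proj S₁ x)
    refine ⟨C, ⟨hC, ?_⟩, hmem⟩
    intro z hz
    have hacc : Accessible R₁ (proj S₁ x) z := (hC.2 _ hmem z).mpr hz
    obtain ⟨x', hacc', rfl⟩ := accessible_lift S₁ R₁ x z hacc
    have : x' ∈ Γ := (hΓ.2 x hx x').mp
      (accessible_mono Set.subset_union_left hacc')
    exact ⟨x', this, rfl⟩
end

section
/- Let G = G₁ ∪ G₂ be a reaction-disjoint union of reaction networks with S₁ ∩ S₂ ≠ ∅, and let Γ be an irreducible component of G. Suppose: (B1) p₁(Γ) is a union of irreducible components of G₁ each carrying a product-form stationary distribution π₁(p₁(x)) ∝ ∏_{i∈S₁∖(S₁∩S₂)} f_i(x_i) · ∏_{i∈S₁∩S₂} f_i¹(x_i); (B2) the analogous statement holds for G₂ with shared-species factors f_i²; (B3) there exists α > 0 with α f_i¹(x_i) = f_i²(x_i) for all x ∈ Γ and all i ∈ S₁∩S₂. If the function ∏_{i∈S} f_i(x_i) (with f_i := f_i² on shared species) is summable over Γ, then its normalization π(x) = Z⁻¹ ∏_{i∈S}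 f_i(x_i) is a stationary distribution of G on Γ, and G is generalized balanced for π with respect to {(R₁,R₁),(R₂,R₂)}. -/
/-- One jump of the CTMC on the nonnegative orthant of `ℤ^σ`: from a nonnegative state
`x`, an active reaction `ν → ν'` moves `x` to `x + ν' - ν`. -/
def StepZ {σ : Type*} (R : Finset ((σ → ℤ) × (σ → ℤ))) (x y : σ → ℤ) : Prop :=
  (∀ i, 0 ≤ x i) ∧ ∃ r ∈ R, (∀ i, r.1 i ≤ x i) ∧ y = x + r.2 - r.1

/-- Accessibility via finite sequences of active reactions. -/
def AccessibleZ {σ : Type*} (R : Finset ((σ → ℤ) × (σ → ℤ))) :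
    (σ → ℤ) → (σ → ℤ) → Prop :=
  Relation.ReflTransGen (StepZ R)

/-- An irreducible component (closed communicating class). -/
def IsIrreducibleComponentZ {σ : Type*} (R : Finset ((σ → ℤ) × (σ → ℤ)))
    (Γ : Set (σ → ℤ)) : Prop :=
  Γ.Nonempty ∧ ∀ x ∈ Γ, ∀ u, AccessibleZ R x u ↔ u ∈ Γ

/-- A network is essential if every state of the nonnegative orthant lies in a closed
communicating class. -/
def EssentialZ {σ : Type*} (R : Finset ((σ → ℤ) × (σ → ℤ))) : Prop :=
  ∀ x : σ → ℤ, (∀ i, 0 ≤ x i) → ∃ Γ, IsIrreducibleComponentZ R Γ ∧ x ∈ Γ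

/-- The master (stationarity) equation for `π` on `Γ`, restricted to the reactions of
`R`. -/
def MasterEq {σ : Type*} (R : Finset ((σ → ℤ) × (σ → ℤ)))
    (lam : ((σ → ℤ) × (σ → ℤ)) → (σ → ℤ) → ℝ) (Γ : Set (σ → ℤ))
    (π : (σ → ℤ) → ℝ) : Prop :=
  ∀ x ∈ Γ, ∑ r ∈ R, π (x + r.1 - r.2) * lam r (x + r.1 - r.2) = π x * ∑ r ∈ R, lam r x

/-- `π` is a stationary distribution of the network `R` on `Γ`. -/
def IsStationaryDist {σ : Type*} (R : Finset ((σ → ℤ) × (σ → ℤ)))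
    (lam : ((σ → ℤ) × (σ → ℤ)) → (σ → ℤ) → ℝ) (Γ : Set (σ → ℤ))
    (π : (σ → ℤ) → ℝ) : Prop :=
  (∀ z, 0 ≤ π z) ∧ (∀ z ∉ Γ, π z = 0) ∧ (∑' z : Γ, π ↑z = 1) ∧ MasterEq R lam Γ π

/-- Zero-padding embedding of a state on species `S` into the full species set. -/
def padZ {ι : Type*} [DecidableEq ι] (S : Finset ι) (v : ↥S → ℤ) : ι → ℤ :=
  fun i => if h : i ∈ S then v ⟨i, h⟩ else 0

/-- Coordinate projection onto the species of `S`. -/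
def projZ {ι : Type*} (S : Finset ι) (x : ι → ℤ) : ↥S → ℤ := fun i => x ↑i

/-- The reactions of a subnetwork on species `S`, embedded by zero-padding. -/
def padRZ {ι : Type*} [Fintype ι] [DecidableEq ι] (S : Finset ι)
    (R : Finset ((↥S → ℤ) × (↥S → ℤ))) : Finset ((ι → ℤ) × (ι → ℤ)) :=
  R.image (fun r => (padZ S r.1, padZ S r.2))

section helpers

variable {ι : Type*} [Fintype ι] [DecidableEq ι]

lemma projZ_padZ (S : Finset ι) (v : ↥S → ℤ) : projZ S (padZ S v) = v :=
  funext fun i => dif_pos i.2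

lemma padZ_injective (S : Finset ι) : Function.Injective (padZ S) := by
  intro v w h
  have := congrArg (projZ S) h
  rwa [projZ_padZ, projZ_padZ] at this

lemma projZ_shift (S : Finset ι) (x : ι → ℤ) (u v : ↥S → ℤ) :
    projZ S (x + padZ S u - padZ S v) = projZ S x + u - v := by
  funext i
  simp [projZ, padZ, dif_pos i.2]

lemma shift_off (S : Finset ι) (x : ι → ℤ) (u v : ↥S → ℤ) {i : ι} (hi : i ∉ S) :
    (x + padZ S u - padZ S v) i = x i := by
  simp [padZ, dif_neg hi]

lemma comp_eq_of_mem {σ : Type*} {R : Finset ((σ → ℤ) × (σ → ℤ))} {C C' : Set (σ → ℤ)}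
    (hC : IsIrreducibleComponentZ R C) (hC' : IsIrreducibleComponentZ R C')
    {z : σ → ℤ} (hz : z ∈ C) (hz' : z ∈ C') : C = C' :=
  Set.ext fun u => (hC.2 z hz u).symm.trans (hC'.2 z hz' u)

lemma comp_singleton {σ : Type*} {R : Finset ((σ → ℤ) × (σ → ℤ))} {Γ : Set (σ → ℤ)}
    (hΓ : IsIrreducibleComponentZ R Γ) {x : σ → ℤ} (hx : x ∈ Γ)
    (hneg : ¬ ∀ i, 0 ≤ x i) : Γ = {x} := by
  ext u
  simp only [Set.mem_singleton_iff]
  constructor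
  · intro hu
    have h := (hΓ.2 x hx u).mpr hu
    rcases Relation.ReflTransGen.cases_head h with h1 | ⟨c, hstep, _⟩
    · exact h1.symm
    · exact absurd hstep.1 hneg
  · rintro rfl; exact hx

lemma acc_lift (S : Finset ι) (R : Finset ((↥S → ℤ) × (↥S → ℤ)))
    (hRnn : ∀ r ∈ R, ∀ i, 0 ≤ r.1 i ∧ 0 ≤ r.2 i)
    (Rall : Finset ((ι → ℤ) × (ι → ℤ))) (hsub : padRZ S R ⊆ Rall)
    {z z' : ↥S → ℤ} (hacc : AccessibleZ R z z')
    (w : ι → ℤ) (hw : projZ S w = z) (hwn : ∀ i ∉ S, 0 ≤ w i) :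
    AccessibleZ Rall w (fun i => if h : i ∈ S then z' ⟨i, h⟩ else w i) := by
  induction hacc with
  | refl =>
    have : (fun i => if h : i ∈ S then z ⟨i, h⟩ else w i) = w := by
      funext i
      by_cases h : i ∈ S
      · rw [dif_pos h, ← hw]; rfl
      · rw [dif_neg h]
    rw [this]
    exact Relation.ReflTransGen.refl
  | @tail b c hab hbc ih =>
    refine ih.tail ?_
    obtain ⟨hbnn, r, hr, hle, hc⟩ := hbc
    refine ⟨fun i => ?_, (padZ S r.1, padZ S r.2),
      hsub (Finset.mem_image_of_mem _ hr), fun i => ?_, ?_⟩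
    · by_cases h : i ∈ S
      · simpa only [dif_pos h] using hbnn ⟨i, h⟩
      · simpa only [dif_neg h] using hwn i h
    · by_cases h : i ∈ S
      · simp only [padZ, dif_pos h]; exact hle ⟨i, h⟩
      · simp only [padZ, dif_neg h]; exact hwn i h
    · funext i
      by_cases h : i ∈ S
      · simp only [Pi.add_apply, Pi.sub_apply, padZ, dif_pos h]
        have := congrFun hc ⟨i, h⟩
        simpa using this
      · simp only [Pi.add_apply, Pi.sub_apply, padZ, dif_neg h]
        ring

end helpers

lemma master_side {ι : Type*} [Fintype ι] [DecidableEq ι] (S : Finset ι)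
    (R : Finset ((↥S → ℤ) × (↥S → ℤ)))
    (hRnn : ∀ r ∈ R, ∀ i, 0 ≤ r.1 i ∧ 0 ≤ r.2 i)
    (lam : ((↥S → ℤ) × (↥S → ℤ)) → (↥S → ℤ) → ℝ)
    (hlam0 : ∀ r ∈ R, ∀ y, ¬ (∀ i, r.1 i ≤ y i) → lam r y = 0)
    (Lam : ((ι → ℤ) × (ι → ℤ)) → (ι → ℤ) → ℝ)
    (hLam : ∀ r ∈ R, ∀ x : ι → ℤ, Lam (padZ S r.1, padZ S r.2) x = lam r (projZ S x))
    (Rall : Finset ((ι → ℤ) × (ι → ℤ))) (hsub : padRZ S R ⊆ Rall)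
    (Γ : Set (ι → ℤ)) (hΓ : IsIrreducibleComponentZ Rall Γ)
    (𝒞 : Set (Set (↥S → ℤ))) (h𝒞 : ∀ C ∈ 𝒞, IsIrreducibleComponentZ R C)
    (hcov : ⋃₀ 𝒞 = projZ S '' Γ)
    (φ : (↥S → ℤ) → ℝ)
    (hstatC : ∀ C ∈ 𝒞, ∃ c : ℝ, c ≠ 0 ∧ MasterEq R lam C (C.indicator fun y => c * φ y))
    (P B : (ι → ℤ) → ℝ)
    (hfact : ∀ x ∈ Γ, P x = φ (projZ S x) * B x)
    (hB : ∀ (x : ι → ℤ) (u v : ↥S → ℤ), B (x + padZ S u - padZ S v) = B x)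
    (Z : ℝ) (hZ : Z ≠ 0) :
    MasterEq (padRZ S R) Lam Γ (Γ.indicator fun x => P x / Z) := by
  intro x hx
  have hy : projZ S x ∈ ⋃₀ 𝒞 := by
    rw [hcov]; exact ⟨x, hx, rfl⟩
  obtain ⟨C, hC𝒞, hyC⟩ := hy
  obtain ⟨c, hc, hmc⟩ := hstatC C hC𝒞
  have hCcomp := h𝒞 C hC𝒞
  -- correspondence lemma
  have corr : ∀ r ∈ R, (∀ i, r.2 i ≤ projZ S x i) →
      ((x + padZ S r.1 - padZ S r.2) ∈ Γ ↔ (projZ S x + r.1 - r.2) ∈ C) := by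
    intro r hr hle
    have hproj : projZ S (x + padZ S r.1 - padZ S r.2) = projZ S x + r.1 - r.2 :=
      projZ_shift S x r.1 r.2
    constructor
    · intro hx'
      have hmem : projZ S x + r.1 - r.2 ∈ ⋃₀ 𝒞 := by
        rw [hcov]; exact ⟨_, hx', hproj⟩
      obtain ⟨C', hC'𝒞, hy'⟩ := hmem
      have hstep : StepZ R (projZ S x + r.1 - r.2) (projZ S x) := by
        refine ⟨fun i => ?_, r, hr, fun i => ?_, ?_⟩
        · have h1 := (hRnn r hr i).1
          have h2 := hle i
          simp only [Pi.add_apply, Pi.sub_apply]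
          omega
        · have h2 := hle i
          simp only [Pi.add_apply, Pi.sub_apply]
          omega
        · funext i; simp only [Pi.add_apply, Pi.sub_apply]; ring
      have hyC' : projZ S x ∈ C' :=
        ((h𝒞 C' hC'𝒞).2 _ hy' (projZ S x)).mp (Relation.ReflTransGen.single hstep)
      have hCC := comp_eq_of_mem hCcomp (h𝒞 C' hC'𝒞) hyC hyC'
      rwa [hCC]
    · intro hy'
      by_cases hxnn : ∀ i, 0 ≤ x i
      · have hacc : AccessibleZ R (projZ S x) (projZ S x + r.1 - r.2) :=
          (hCcomp.2 _ hyC _).mpr hy'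
        have hlift := acc_lift S R hRnn Rall hsub hacc x rfl (fun i _ => hxnn i)
        have heq : (fun i => if h : i ∈ S then (projZ S x + r.1 - r.2) ⟨i, h⟩ else x i)
            = x + padZ S r.1 - padZ S r.2 := by
          funext i
          by_cases h : i ∈ S
          · simp [dif_pos h, Pi.add_apply, Pi.sub_apply, padZ, projZ]
          · simp [dif_neg h, Pi.add_apply, Pi.sub_apply, padZ]
        rw [heq] at hlift
        exact (hΓ.2 x hx _).mp hlift
      · have hsing : Γ = {x} := comp_singleton hΓ hx hxnn
        have hCsub : C ⊆ {projZ S x} := by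
          have hU : ⋃₀ 𝒞 = {projZ S x} := by
            rw [hcov, hsing, Set.image_singleton]
          rw [← hU]
          exact Set.subset_sUnion_of_mem hC𝒞
        have hyy : projZ S x + r.1 - r.2 = projZ S x := hCsub hy'
        have hxx : x + padZ S r.1 - padZ S r.2 = x := by
          funext i
          by_cases h : i ∈ S
          · have h2 := congrFun hyy ⟨i, h⟩
            simp only [Pi.add_apply, Pi.sub_apply, projZ] at h2
            simp only [Pi.add_apply, Pi.sub_apply, padZ, dif_pos h]
            omega
          · exact shift_off S x r.1 r.2 h
        rw [hxx]; exact hx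
  have masterC := hmc (projZ S x) hyC
  have hinjR : ∀ a ∈ R, ∀ b ∈ R,
      (padZ S a.1, padZ S a.2) = (padZ S b.1, padZ S b.2) → a = b := by
    intro a _ b _ h
    have h1 := congrArg Prod.fst h
    have h2 := congrArg Prod.snd h
    simp only at h1 h2
    exact Prod.ext (padZ_injective S h1) (padZ_injective S h2)
  unfold padRZ
  rw [Finset.sum_image hinjR, Finset.sum_image hinjR]
  have key : ∀ r ∈ R,
      (Γ.indicator fun x => P x / Z)
          (x + (padZ S r.1, padZ S r.2).1 - (padZ S r.1, padZ S r.2).2)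
        * Lam (padZ S r.1, padZ S r.2)
          (x + (padZ S r.1, padZ S r.2).1 - (padZ S r.1, padZ S r.2).2)
      = (B x / (c * Z)) * ((C.indicator fun y => c * φ y) (projZ S x + r.1 - r.2)
          * lam r (projZ S x + r.1 - r.2)) := by
    intro r hr
    simp only
    rw [hLam r hr, projZ_shift]
    by_cases hl : lam r (projZ S x + r.1 - r.2) = 0
    · rw [hl]; ring
    · have hν : ∀ i, r.1 i ≤ (projZ S x + r.1 - r.2) i := by
        by_contra hcon
        exact hl (hlam0 r hr _ hcon)
      have hle : ∀ i, r.2 i ≤ projZ S x i := by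
        intro i
        have := hν i
        simp only [Pi.add_apply, Pi.sub_apply] at this
        omega
      by_cases hx' : (x + padZ S r.1 - padZ S r.2) ∈ Γ
      · have hy' : (projZ S x + r.1 - r.2) ∈ C := (corr r hr hle).mp hx'
        rw [Set.indicator_of_mem hx', Set.indicator_of_mem hy', hfact _ hx',
          projZ_shift, hB]
        field_simp
      · have hy' := mt (corr r hr hle).mpr hx'
        rw [Set.indicator_of_notMem hx', Set.indicator_of_notMem hy']
        ring
  rw [Finset.sum_congr rfl key]
  have key2 : ∀ r ∈ R, Lam (padZ S r.1, padZ S r.2) x = lam r (projZ S x) :=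
    fun r hr => hLam r hr x
  calc ∑ r ∈ R, (B x / (c * Z)) * ((C.indicator fun y => c * φ y) (projZ S x + r.1 - r.2)
          * lam r (projZ S x + r.1 - r.2))
      = (B x / (c * Z)) * ∑ r ∈ R, (C.indicator fun y => c * φ y) (projZ S x + r.1 - r.2)
          * lam r (projZ S x + r.1 - r.2) := by rw [Finset.mul_sum]
    _ = (B x / (c * Z)) * ((C.indicator fun y => c * φ y) (projZ S x)
          * ∑ r ∈ R, lam r (projZ S x)) := by rw [masterC]
    _ = (Γ.indicator fun x => P x / Z) x * ∑ r ∈ R, Lam (padZ S r.1, padZ S r.2) x := by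
        rw [Finset.sum_congr rfl key2, Set.indicator_of_mem hx, Set.indicator_of_mem hyC,
          hfact x hx]
        field_simp

open Classical in
/-- Theorem `patch_CRN1`: product-form stationary distributions of the two
parts of a reaction-disjoint union, agreeing (up to a constant `α`) on the shared
species, combine to a product-form stationary distribution of the union, which is
generalized balanced for `{(R₁,R₁),(R₂,R₂)}`. -/
theorem stmt10 {ι : Type*} [Fintype ι] [DecidableEq ι] (S₁ S₂ : Finset ι)
    (hcov : S₁ ∪ S₂ = Finset.univ) (hshared : (S₁ ∩ S₂).Nonempty)
    (R₁ : Finset ((↥S₁ → ℤ) × (↥S₁ → ℤ))) (R₂ : Finset ((↥S₂ → ℤ) × (↥S₂ → ℤ)))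
    (hR₁nn : ∀ r ∈ R₁, ∀ i, 0 ≤ r.1 i ∧ 0 ≤ r.2 i)
    (hR₂nn : ∀ r ∈ R₂, ∀ i, 0 ≤ r.1 i ∧ 0 ≤ r.2 i)
    (hdisj : Disjoint (padRZ S₁ R₁) (padRZ S₂ R₂))
    (lam₁ : ((↥S₁ → ℤ) × (↥S₁ → ℤ)) → (↥S₁ → ℤ) → ℝ)
    (lam₂ : ((↥S₂ → ℤ) × (↥S₂ → ℤ)) → (↥S₂ → ℤ) → ℝ)
    (hlam₁0 : ∀ r ∈ R₁, ∀ y, ¬ (∀ i, r.1 i ≤ y i) → lam₁ r y = 0)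
    (hlam₂0 : ∀ r ∈ R₂, ∀ y, ¬ (∀ i, r.1 i ≤ y i) → lam₂ r y = 0)
    (Lam : ((ι → ℤ) × (ι → ℤ)) → (ι → ℤ) → ℝ)
    (hLam₁ : ∀ r ∈ R₁, ∀ x : ι → ℤ, Lam (padZ S₁ r.1, padZ S₁ r.2) x = lam₁ r (projZ S₁ x))
    (hLam₂ : ∀ r ∈ R₂, ∀ x : ι → ℤ, Lam (padZ S₂ r.1, padZ S₂ r.2) x = lam₂ r (projZ S₂ x))
    (Γ : Set (ι → ℤ)) (hΓ : IsIrreducibleComponentZ (padRZ S₁ R₁ ∪ padRZ S₂ R₂) Γ)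
    -- product-form functions: `f` for non-shared species, `f1`/`f2` for shared species
    (f f1 f2 : ι → ℤ → ℝ)
    (hfpos : ∀ i m, 0 ≤ m → 0 < f i m) (hf1pos : ∀ i m, 0 ≤ m → 0 < f1 i m)
    (hf2pos : ∀ i m, 0 ≤ m → 0 < f2 i m)
    -- (B1): p₁(Γ) is a union of irreducible components of G₁ carrying product-form
    -- stationary distributions
    (hB1 : ∃ 𝒞 : Set (Set (↥S₁ → ℤ)),
      (∀ C ∈ 𝒞, IsIrreducibleComponentZ R₁ C) ∧ ⋃₀ 𝒞 = projZ S₁ '' Γ ∧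
      ∀ C ∈ 𝒞, ∃ c > (0:ℝ), IsStationaryDist R₁ lam₁ C
        (C.indicator fun y => c * ∏ i : ↥S₁,
          (if (↑i : ι) ∈ S₂ then f1 ↑i (y i) else f ↑i (y i))))
    -- (B2): the analogous statement for G₂
    (hB2 : ∃ 𝒞 : Set (Set (↥S₂ → ℤ)),
      (∀ C ∈ 𝒞, IsIrreducibleComponentZ R₂ C) ∧ ⋃₀ 𝒞 = projZ S₂ '' Γ ∧
      ∀ C ∈ 𝒞, ∃ c > (0:ℝ), IsStationaryDist R₂ lam₂ C
        (C.indicator fun y => c * ∏ i : ↥S₂,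
          (if (↑i : ι) ∈ S₁ then f2 ↑i (y i) else f ↑i (y i))))
    -- (B3): the shared-species factors agree up to a positive constant on Γ
    (hB3 : ∃ α > (0:ℝ), ∀ x ∈ Γ, ∀ i ∈ S₁ ∩ S₂, α * f1 i (x i) = f2 i (x i))
    -- summability of the combined product-form function over Γ
    (hsum : Summable (fun z : Γ =>
      ∏ i : ι, (if i ∈ S₁ ∩ S₂ then f2 i ((z : ι → ℤ) i) else f i ((z : ι → ℤ) i)))) :
    IsStationaryDist (padRZ S₁ R₁ ∪ padRZ S₂ R₂) Lam Γ
      (Γ.indicator fun x =>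
        (∏ i : ι, (if i ∈ S₁ ∩ S₂ then f2 i (x i) else f i (x i))) /
        (∑' z : Γ, ∏ i : ι, (if i ∈ S₁ ∩ S₂ then f2 i ((z : ι → ℤ) i)
          else f i ((z : ι → ℤ) i)))) ∧
    MasterEq (padRZ S₁ R₁) Lam Γ
      (Γ.indicator fun x =>
        (∏ i : ι, (if i ∈ S₁ ∩ S₂ then f2 i (x i) else f i (x i))) /
        (∑' z : Γ, ∏ i : ι, (if i ∈ S₁ ∩ S₂ then f2 i ((z : ι → ℤ) i)
          else f i ((z : ι → ℤ) i)))) ∧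
    MasterEq (padRZ S₂ R₂) Lam Γ
      (Γ.indicator fun x =>
        (∏ i : ι, (if i ∈ S₁ ∩ S₂ then f2 i (x i) else f i (x i))) /
        (∑' z : Γ, ∏ i : ι, (if i ∈ S₁ ∩ S₂ then f2 i ((z : ι → ℤ) i)
          else f i ((z : ι → ℤ) i)))) := by
  obtain ⟨𝒞₁, h𝒞₁comp, h𝒞₁cov, h𝒞₁stat⟩ := hB1
  obtain ⟨𝒞₂, h𝒞₂comp, h𝒞₂cov, h𝒞₂stat⟩ := hB2
  obtain ⟨α, hα, hαeq⟩ := hB3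
  obtain ⟨x₀, hx₀⟩ := hΓ.1
  have hnotS₂ : ∀ i : ι, i ∉ S₂ → i ∈ S₁ := by
    intro i h
    have hm : i ∈ S₁ ∪ S₂ := by rw [hcov]; exact Finset.mem_univ i
    rcases Finset.mem_union.mp hm with h1 | h2
    · exact h1
    · exact absurd h2 h
  set P : (ι → ℤ) → ℝ := fun x => ∏ i, (if i ∈ S₁ ∩ S₂ then f2 i (x i) else f i (x i))
    with hPdef
  set φ₁ : (↥S₁ → ℤ) → ℝ :=
    fun y => ∏ i : ↥S₁, (if (↑i : ι) ∈ S₂ then f1 ↑i (y i) else f ↑i (y i)) with hφ₁def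
  set φ₂ : (↥S₂ → ℤ) → ℝ :=
    fun y => ∏ i : ↥S₂, (if (↑i : ι) ∈ S₁ then f2 ↑i (y i) else f ↑i (y i)) with hφ₂def
  set B₁ : (ι → ℤ) → ℝ :=
    fun x => (∏ i ∈ S₁, (if i ∈ S₂ then α else 1)) * ∏ i ∈ S₁ᶜ, f i (x i) with hB₁def
  set B₂ : (ι → ℤ) → ℝ := fun x => ∏ i ∈ S₂ᶜ, f i (x i) with hB₂def
  set Z : ℝ := ∑' z : Γ, P ↑z with hZdef
  have hφ₁eq : ∀ x : ι → ℤ,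
      φ₁ (projZ S₁ x) = ∏ i ∈ S₁, (if i ∈ S₂ then f1 i (x i) else f i (x i)) := by
    intro x
    rw [hφ₁def]
    simp only [projZ]
    exact Finset.prod_coe_sort S₁ (fun i => if i ∈ S₂ then f1 i (x i) else f i (x i))
  have hφ₂eq : ∀ x : ι → ℤ,
      φ₂ (projZ S₂ x) = ∏ i ∈ S₂, (if i ∈ S₁ then f2 i (x i) else f i (x i)) := by
    intro x
    rw [hφ₂def]
    simp only [projZ]
    exact Finset.prod_coe_sort S₂ (fun i => if i ∈ S₁ then f2 i (x i) else f i (x i))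
  have hsplit₁ : ∀ x : ι → ℤ,
      P x = (∏ i ∈ S₁, (if i ∈ S₂ then f2 i (x i) else f i (x i))) * ∏ i ∈ S₁ᶜ, f i (x i) := by
    intro x
    rw [hPdef]
    simp only
    rw [← Finset.prod_mul_prod_compl S₁
      (fun i => if i ∈ S₁ ∩ S₂ then f2 i (x i) else f i (x i))]
    congr 1
    · exact Finset.prod_congr rfl fun i hi => by simp [Finset.mem_inter, hi]
    · exact Finset.prod_congr rfl fun i hi => by
        simp [Finset.mem_inter, Finset.mem_compl.mp hi]
  have hfact₁ : ∀ x ∈ Γ, P x = φ₁ (projZ S₁ x) * B₁ x := by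
    intro x hx
    have e2 : (∏ i ∈ S₁, (if i ∈ S₂ then f2 i (x i) else f i (x i)))
        = (∏ i ∈ S₁, (if i ∈ S₂ then α else 1))
          * ∏ i ∈ S₁, (if i ∈ S₂ then f1 i (x i) else f i (x i)) := by
      rw [← Finset.prod_mul_distrib]
      refine Finset.prod_congr rfl fun i hi => ?_
      by_cases h : i ∈ S₂
      · rw [if_pos h, if_pos h, if_pos h]
        exact (hαeq x hx i (Finset.mem_inter.mpr ⟨hi, h⟩)).symm
      · rw [if_neg h, if_neg h, if_neg h, one_mul]
    rw [hsplit₁ x, e2, hφ₁eq x, hB₁def]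
    ring
  have hfact₂ : ∀ x ∈ Γ, P x = φ₂ (projZ S₂ x) * B₂ x := by
    intro x _
    rw [hPdef]
    simp only
    rw [← Finset.prod_mul_prod_compl S₂
      (fun i => if i ∈ S₁ ∩ S₂ then f2 i (x i) else f i (x i)), hφ₂eq x, hB₂def]
    congr 1
    · exact Finset.prod_congr rfl fun i hi => by simp [Finset.mem_inter, hi]
    · exact Finset.prod_congr rfl fun i hi => by
        simp [Finset.mem_inter, Finset.mem_compl.mp hi]
  have hB₁inv : ∀ (x : ι → ℤ) (u v : ↥S₁ → ℤ), B₁ (x + padZ S₁ u - padZ S₁ v) = B₁ x := by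
    intro x u v
    rw [hB₁def]
    simp only
    congr 1
    exact Finset.prod_congr rfl fun i hi => by
      rw [shift_off S₁ x u v (Finset.mem_compl.mp hi)]
  have hB₂inv : ∀ (x : ι → ℤ) (u v : ↥S₂ → ℤ), B₂ (x + padZ S₂ u - padZ S₂ v) = B₂ x := by
    intro x u v
    rw [hB₂def]
    simp only
    exact Finset.prod_congr rfl fun i hi => by
      rw [shift_off S₂ x u v (Finset.mem_compl.mp hi)]
  have hφ₁split : ∀ x : ι → ℤ,
      φ₁ (projZ S₁ x) = (∏ i ∈ S₁.filter (· ∈ S₂), f1 i (x i)) * B₂ x := by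
    intro x
    rw [hφ₁eq x, ← Finset.prod_filter_mul_prod_filter_not S₁ (· ∈ S₂), hB₂def]
    congr 1
    · exact Finset.prod_congr rfl fun i hi => if_pos (Finset.mem_filter.mp hi).2
    · have hset : S₁.filter (fun i => ¬ i ∈ S₂) = S₂ᶜ := by
        ext i
        simp only [Finset.mem_filter, Finset.mem_compl]
        exact ⟨fun h => h.2, fun h => ⟨hnotS₂ i h, h⟩⟩
      rw [hset]
      exact Finset.prod_congr rfl fun i hi => if_neg (Finset.mem_compl.mp hi)
  have hsum' : Summable (fun z : Γ => P ↑z) := hsum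
  have hkey : Z ≠ 0 ∧ ∀ z ∈ Γ, 0 ≤ P z / Z := by
    by_cases hall : ∀ z ∈ Γ, ∀ i, 0 ≤ z i
    · have hPpos : ∀ z ∈ Γ, 0 < P z := by
        intro z hz
        rw [hPdef]
        refine Finset.prod_pos fun i _ => ?_
        by_cases h : i ∈ S₁ ∩ S₂
        · rw [if_pos h]; exact hf2pos i (z i) (hall z hz i)
        · rw [if_neg h]; exact hfpos i (z i) (hall z hz i)
      have hZpos : 0 < Z := by
        rw [hZdef]
        exact Summable.tsum_pos hsum' (fun z => (hPpos z z.2).le) ⟨x₀, hx₀⟩ (hPpos x₀ hx₀)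
      exact ⟨ne_of_gt hZpos, fun z hz => div_nonneg (hPpos z hz).le hZpos.le⟩
    · push_neg at hall
      obtain ⟨x, hxΓ, i₀, hi₀⟩ := hall
      have hxneg : ¬ ∀ i, 0 ≤ x i := fun h => absurd (h i₀) (not_le.mpr hi₀)
      have hsing : Γ = {x} := comp_singleton hΓ hxΓ hxneg
      have hZx : Z = P x := by
        rw [hZdef, tsum_subtype Γ (fun z => P z), hsing,
          ← tsum_subtype ({x} : Set (ι → ℤ)) (fun z => P z), tsum_singleton]
      have hφ₁pos : 0 < φ₁ (projZ S₁ x) := by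
        have hy1 : projZ S₁ x ∈ ⋃₀ 𝒞₁ := by rw [h𝒞₁cov]; exact ⟨x, hxΓ, rfl⟩
        obtain ⟨C, hC, hyC⟩ := hy1
        have hCeq : C = {projZ S₁ x} := by
          apply Set.Subset.antisymm
          · have hU : ⋃₀ 𝒞₁ = {projZ S₁ x} := by rw [h𝒞₁cov, hsing, Set.image_singleton]
            rw [← hU]
            exact Set.subset_sUnion_of_mem hC
          · exact Set.singleton_subset_iff.mpr hyC
        obtain ⟨c, hc, hsd⟩ := h𝒞₁stat C hC
        have ht := hsd.2.2.1
        rw [hCeq, tsum_singleton, Set.indicator_of_mem (Set.mem_singleton _)] at ht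
        have ht2 : c * φ₁ (projZ S₁ x) = 1 := ht
        nlinarith [ht2, hc]
      have hφ₂pos : 0 < φ₂ (projZ S₂ x) := by
        have hy2 : projZ S₂ x ∈ ⋃₀ 𝒞₂ := by rw [h𝒞₂cov]; exact ⟨x, hxΓ, rfl⟩
        obtain ⟨C, hC, hyC⟩ := hy2
        have hCeq : C = {projZ S₂ x} := by
          apply Set.Subset.antisymm
          · have hU : ⋃₀ 𝒞₂ = {projZ S₂ x} := by rw [h𝒞₂cov, hsing, Set.image_singleton]
            rw [← hU]
            exact Set.subset_sUnion_of_mem hC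
          · exact Set.singleton_subset_iff.mpr hyC
        obtain ⟨c, hc, hsd⟩ := h𝒞₂stat C hC
        have ht := hsd.2.2.1
        rw [hCeq, tsum_singleton, Set.indicator_of_mem (Set.mem_singleton _)] at ht
        have ht2 : c * φ₂ (projZ S₂ x) = 1 := ht
        nlinarith [ht2, hc]
      have hPx : P x ≠ 0 := by
        have h2 : B₂ x ≠ 0 := by
          intro h0
          rw [hφ₁split x, h0, mul_zero] at hφ₁pos
          exact lt_irrefl 0 hφ₁pos
        rw [hfact₂ x hxΓ]
        exact mul_ne_zero (ne_of_gt hφ₂pos) h2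
      refine ⟨by rw [hZx]; exact hPx, ?_⟩
      intro z hz
      rw [hsing, Set.mem_singleton_iff] at hz
      rw [hz, hZx, div_self hPx]
      norm_num
  obtain ⟨hZ0, hπnn⟩ := hkey
  have hM₁ : MasterEq (padRZ S₁ R₁) Lam Γ (Γ.indicator fun x => P x / Z) := by
    refine master_side S₁ R₁ hR₁nn lam₁ hlam₁0 Lam hLam₁ _ Finset.subset_union_left Γ hΓ
      𝒞₁ h𝒞₁comp h𝒞₁cov φ₁ ?_ P B₁ hfact₁ hB₁inv Z hZ0
    intro C hC
    obtain ⟨c, hc, hsd⟩ := h𝒞₁stat C hC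
    exact ⟨c, ne_of_gt hc, hsd.2.2.2⟩
  have hM₂ : MasterEq (padRZ S₂ R₂) Lam Γ (Γ.indicator fun x => P x / Z) := by
    refine master_side S₂ R₂ hR₂nn lam₂ hlam₂0 Lam hLam₂ _ Finset.subset_union_right Γ hΓ
      𝒞₂ h𝒞₂comp h𝒞₂cov φ₂ ?_ P B₂ hfact₂ hB₂inv Z hZ0
    intro C hC
    obtain ⟨c, hc, hsd⟩ := h𝒞₂stat C hC
    exact ⟨c, ne_of_gt hc, hsd.2.2.2⟩
  have hMunion : MasterEq (padRZ S₁ R₁ ∪ padRZ S₂ R₂) Lam Γ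
      (Γ.indicator fun x => P x / Z) := by
    intro x hx
    rw [Finset.sum_union hdisj, Finset.sum_union hdisj, mul_add, hM₁ x hx, hM₂ x hx]
  have hnn : ∀ z, 0 ≤ (Γ.indicator fun x => P x / Z) z := by
    intro z
    by_cases hz : z ∈ Γ
    · rw [Set.indicator_of_mem hz]; exact hπnn z hz
    · rw [Set.indicator_of_notMem hz]
  have hzero : ∀ z ∉ Γ, (Γ.indicator fun x => P x / Z) z = 0 :=
    fun z hz => Set.indicator_of_notMem hz _
  have htot : ∑' z : Γ, (Γ.indicator fun x => P x / Z) ↑z = 1 := by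
    have hcong : ∀ z : Γ, (Γ.indicator fun x => P x / Z) ↑z = P ↑z / Z :=
      fun z => Set.indicator_of_mem z.2 _
    rw [tsum_congr hcong, tsum_div_const, ← hZdef, div_self hZ0]
  exact ⟨⟨hnn, hzero, htot, hMunion⟩, hM₁, hM₂⟩
end
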